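/- For g > 0, h > 0, the function h ↦ ψ_{B,g,h}(λ) is nondecreasing for each fixed λ ≥ 0, and ψ_{B,g,h}(λ) ↓ ψ_{P,−g}(λ) = (e^{−gλ} + gλ − 1)/g² as h ↓ 0. Consequently, for c < 0, ψ_{P,c}(λ) ≤ ψ_{B,−c,h}(λ) for every h > 0 and all λ ≥ 0. -/

import Mathlib

open Filter

section Aux

private lemma psiB_key1 (a b : ℝ) (ha : 0 ≤ a) (hab : a ≤ b) :
    b * (Real.exp a - 1) ≤ a * (Real.exp b - 1) := by
  rcases eq_or_lt_of_le (ha.trans hab) with hb | hb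
  · have hb0 : b = 0 := hb.symm
    have ha0 : a = 0 := le_antisymm (hb0 ▸ hab) ha
    simp [ha0, hb0]
  · have hw1 : (0:ℝ) ≤ 1 - a / b := by
      have : a / b ≤ 1 := (div_le_one hb).mpr hab
      linarith
    have hw2 : (0:ℝ) ≤ a / b := by positivity
    have h1 := convexOn_exp.2 (Set.mem_univ (0:ℝ)) (Set.mem_univ b) hw1 hw2 (by ring)
    simp only [smul_eq_mul, mul_zero, zero_add, div_mul_cancel₀ _ hb.ne',
      Real.exp_zero, mul_one] at h1
    have e1 : b * (a / b) = a := by field_simp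
    nlinarith [mul_le_mul_of_nonneg_left h1 hb.le, Real.exp_pos b, e1]

private lemma psiB_key2 (g h₁ h₂ t : ℝ) (hg : 0 < g) (hh1 : 0 < h₁) (h12 : h₁ ≤ h₂)
    (ht : 0 ≤ t) :
    (Real.exp (h₁*t) - Real.exp (-(g*t))) * (g*Real.exp (h₂*t) + h₂*Real.exp (-(g*t)))
      ≤ (Real.exp (h₂*t) - Real.exp (-(g*t))) * (g*Real.exp (h₁*t) + h₁*Real.exp (-(g*t))) := by
  rcases ht.eq_or_lt with rfl | ht
  · norm_num
  · have hz : 0 < Real.exp (-(g*t)) := Real.exp_pos _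
    have e1 : Real.exp (h₁*t) = Real.exp ((g+h₁)*t) * Real.exp (-(g*t)) := by
      rw [← Real.exp_add]; ring_nf
    have e2 : Real.exp (h₂*t) = Real.exp ((g+h₂)*t) * Real.exp (-(g*t)) := by
      rw [← Real.exp_add]; ring_nf
    have hK := psiB_key1 ((g+h₁)*t) ((g+h₂)*t) (by positivity) (by nlinarith)
    set u := Real.exp ((g+h₁)*t) with hu
    set v := Real.exp ((g+h₂)*t) with hv
    set z := Real.exp (-(g*t)) with hzz
    have h3 : (g+h₂)*(u-1) ≤ (g+h₁)*(v-1) := by nlinarith [hK, ht]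
    rw [e1, e2]
    nlinarith [mul_le_mul_of_nonneg_left h3 (mul_pos hz hz).le]

end Aux

/-- The Bernoulli potential `ψ_{B,g,h}`. -/
noncomputable def psiB (g h l : ℝ) : ℝ :=
  1 / (g * h) * Real.log ((g * Real.exp (h * l) + h * Real.exp (-(g * l))) / (g + h))

private lemma psiB_hasDerivAt (g h : ℝ) (hg : 0 < g) (hh : 0 < h) (t : ℝ) :
    HasDerivAt (fun l => psiB g h l)
      ((Real.exp (h*t) - Real.exp (-(g*t))) / (g*Real.exp (h*t) + h*Real.exp (-(g*t)))) t := by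
  have hN : 0 < g*Real.exp (h*t) + h*Real.exp (-(g*t)) := by positivity
  have d1 : HasDerivAt (fun l : ℝ => Real.exp (h*l)) (Real.exp (h*t) * (h*1)) t :=
    ((hasDerivAt_id t).const_mul h).exp
  have d2 : HasDerivAt (fun l : ℝ => Real.exp (-(g*l))) (Real.exp (-(g*t)) * (-(g*1))) t :=
    ((hasDerivAt_id t).const_mul g).neg.exp
  have dN : HasDerivAt (fun l : ℝ => g * Real.exp (h*l) + h * Real.exp (-(g*l)))
      (g * (Real.exp (h*t) * (h*1)) + h * (Real.exp (-(g*t)) * (-(g*1)))) t :=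
    (d1.const_mul g).add (d2.const_mul h)
  have dq := (dN.div_const (g+h)).log (by positivity)
  have dF := dq.const_mul (1/(g*h))
  have : (fun l => psiB g h l)
      = fun l => 1/(g*h) * Real.log ((g * Real.exp (h*l) + h * Real.exp (-(g*l)))/(g+h)) := rfl
  rw [this]
  refine dF.congr_deriv ?_
  have hgh : g + h ≠ 0 := by positivity
  field_simp
  ring

private lemma psiB_zero (g h : ℝ) (hg : 0 < g) (hh : 0 < h) : psiB g h 0 = 0 := by
  have : (g * Real.exp (h*0) + h * Real.exp (-(g*0))) / (g+h) = 1 := by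
    rw [mul_zero, mul_zero, neg_zero, Real.exp_zero, mul_one, mul_one]
    exact div_self (by positivity)
  unfold psiB
  rw [this, Real.log_one, mul_zero]

private lemma psiB_part1 (g : ℝ) (hg : 0 < g) (l : ℝ) (hl : 0 ≤ l) (h₁ h₂ : ℝ) (hh1 : 0 < h₁)
    (h12 : h₁ ≤ h₂) : psiB g h₁ l ≤ psiB g h₂ l := by
  have hh2 : 0 < h₂ := lt_of_lt_of_le hh1 h12
  have hΦd : ∀ t : ℝ, HasDerivAt (fun s => psiB g h₂ s - psiB g h₁ s)
      ((Real.exp (h₂*t) - Real.exp (-(g*t))) / (g*Real.exp (h₂*t) + h₂*Real.exp (-(g*t)))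
        - (Real.exp (h₁*t) - Real.exp (-(g*t))) / (g*Real.exp (h₁*t) + h₁*Real.exp (-(g*t)))) t :=
    fun t => (psiB_hasDerivAt g h₂ hg hh2 t).sub (psiB_hasDerivAt g h₁ hg hh1 t)
  have mono : MonotoneOn (fun s => psiB g h₂ s - psiB g h₁ s) (Set.Ici 0) := by
    apply monotoneOn_of_deriv_nonneg (convex_Ici 0)
    · exact fun t _ => (hΦd t).continuousAt.continuousWithinAt
    · exact fun t _ => (hΦd t).differentiableAt.differentiableWithinAt
    · intro t ht
      rw [interior_Ici] at ht
      rw [(hΦd t).deriv]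
      have hN1 : 0 < g*Real.exp (h₁*t) + h₁*Real.exp (-(g*t)) := by positivity
      have hN2 : 0 < g*Real.exp (h₂*t) + h₂*Real.exp (-(g*t)) := by positivity
      rw [sub_nonneg, div_le_div_iff₀ hN1 hN2]
      exact psiB_key2 g h₁ h₂ t hg hh1 h12 ht.le
  have hm := mono (Set.mem_Ici.mpr le_rfl) (by exact hl) hl
  have h0 : psiB g h₂ 0 - psiB g h₁ 0 = 0 := by
    rw [psiB_zero g h₂ hg hh2, psiB_zero g h₁ hg hh1, sub_zero]
  simp only [h0] at hm
  linarith

private lemma psiB_part2 (g : ℝ) (hg : 0 < g) (l : ℝ) :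
    Tendsto (fun h => psiB g h l) (nhdsWithin 0 (Set.Ioi 0))
      (nhds ((Real.exp (-(g * l)) + g * l - 1) / g ^ 2)) := by
  set F : ℝ → ℝ := fun h => 1/g * Real.log ((g*Real.exp (h*l) + h*Real.exp (-(g*l)))/(g+h))
    with hF
  have dn : HasDerivAt (fun h : ℝ => g*Real.exp (h*l) + h*Real.exp (-(g*l)))
      (g * (Real.exp (0*l) * (1*l)) + 1 * Real.exp (-(g*l))) 0 :=
    ((((hasDerivAt_id (0:ℝ)).mul_const l).exp).const_mul g).add
      ((hasDerivAt_id (0:ℝ)).mul_const (Real.exp (-(g*l))))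
  have dd : HasDerivAt (fun h : ℝ => g + h) 1 0 := (hasDerivAt_id (0:ℝ)).const_add g
  have hd0 : g + (0:ℝ) ≠ 0 := by simpa using hg.ne'
  have dq := dn.div dd hd0
  have hq0 : (g*Real.exp ((0:ℝ)*l) + 0*Real.exp (-(g*l)))/(g+0) ≠ 0 := by
    rw [zero_mul, Real.exp_zero, mul_one, zero_mul, add_zero]
    exact (div_pos hg hg).ne'
  have dF : HasDerivAt F ((Real.exp (-(g * l)) + g * l - 1) / g ^ 2) 0 := by
    have := (dq.log hq0).const_mul (1/g)
    refine this.congr_deriv ?_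
    simp only [Pi.div_apply]
    rw [zero_mul, Real.exp_zero, mul_one, zero_mul, add_zero, one_mul, one_mul]
    field_simp
    ring
  have hF0 : F 0 = 0 := by
    have : (g*Real.exp ((0:ℝ)*l) + 0*Real.exp (-(g*l)))/(g+0) = 1 := by
      rw [zero_mul, Real.exp_zero, mul_one, zero_mul, add_zero]
      exact div_self hg.ne'
    rw [hF]
    simp only [this, Real.log_one, mul_zero]
  have t1 : Tendsto (slope F 0) (nhdsWithin 0 (Set.Ioi 0))
      (nhds ((Real.exp (-(g * l)) + g * l - 1) / g ^ 2)) :=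
    (hasDerivAt_iff_tendsto_slope.mp dF).mono_left
      (nhdsWithin_mono 0 (fun x hx => by exact ne_of_gt hx))
  apply t1.congr'
  filter_upwards [self_mem_nhdsWithin] with h hh
  have hh0 : h ≠ 0 := ne_of_gt hh
  rw [slope_def_field, hF0, sub_zero, sub_zero]
  show 1/g * Real.log ((g*Real.exp (h*l) + h*Real.exp (-(g*l)))/(g+h)) / h = psiB g h l
  unfold psiB
  field_simp

/-- For `g > 0` and fixed `λ ≥ 0`, `h ↦ ψ_{B,g,h}(λ)` is nondecreasing on
`(0,∞)`, and `ψ_{B,g,h}(λ) ↓ ψ_{P,−g}(λ) = (e^{−gλ} + gλ − 1)/g²` as `h ↓ 0`.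
Consequently for `c < 0`, `ψ_{P,c}(λ) ≤ ψ_{B,−c,h}(λ)` for every `h > 0` and
all `λ ≥ 0`. -/
theorem psiB_mono_in_h_and_limit (g : ℝ) (hg : 0 < g) :
    (∀ l : ℝ, 0 ≤ l → ∀ h₁ h₂ : ℝ, 0 < h₁ → h₁ ≤ h₂ → psiB g h₁ l ≤ psiB g h₂ l) ∧
    (∀ l : ℝ, 0 ≤ l →
      Tendsto (fun h => psiB g h l) (nhdsWithin 0 (Set.Ioi 0))
        (nhds ((Real.exp (-(g * l)) + g * l - 1) / g ^ 2))) ∧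
    (∀ c : ℝ, c < 0 → ∀ h : ℝ, 0 < h → ∀ l : ℝ, 0 ≤ l →
      (Real.exp (c * l) - c * l - 1) / c ^ 2 ≤ psiB (-c) h l) := by
  refine ⟨fun l hl h₁ h₂ hh1 h12 => psiB_part1 g hg l hl h₁ h₂ hh1 h12,
    fun l _ => psiB_part2 g hg l, fun c hc h hh l hl => ?_⟩
  have hgc : 0 < -c := neg_pos.mpr hc
  have hlim := psiB_part2 (-c) hgc l
  have hev : ∀ᶠ x in nhdsWithin 0 (Set.Ioi 0), psiB (-c) x l ≤ psiB (-c) h l := by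
    filter_upwards [Ioo_mem_nhdsGT hh] with x hx
    exact psiB_part1 (-c) hgc l hl x h hx.1 hx.2.le
  have hle := le_of_tendsto hlim hev
  have e1 : -(-c * l) = c * l := by ring
  have e2 : (-c : ℝ) ^ 2 = c ^ 2 := by ring
  rw [e1, e2] at hle
  have e3 : (Real.exp (c * l) + -c * l - 1) / c ^ 2
      = (Real.exp (c * l) - c * l - 1) / c ^ 2 := by ring
  rw [e3] at hle
  exact hle
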